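/- (Reduction of the bounded-height case to finitely many pairs.) Let p be a positive integer and let ν be a fixed partition with at most p nonzero parts. Suppose that for every partition α with at most p nonzero parts and largest part α_1 ≤ p(ν_1 + p), and for every partition θ, one has c_{αν}^θ ≤ c_{λ(α,ν)ρ(α,ν)}^θ. Then for every partition μ with at most p nonzero parts and every partition θ, one has c_{μν}^θ ≤ c_{λ(μ,ν)ρ(μ,ν)}^θ. -/

import Mathlib

/-- A partition with `n` (possibly zero) parts: a weakly decreasing sequence of
nonnegative integers, recorded 0-indexed, vanishing from index `n` on. -/
def IsPartitionN (n : ℕ) (μ : ℕ → ℕ) : Prop :=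
  Antitone μ ∧ ∀ i, n ≤ i → μ i = 0

/-- A partition (finitely many nonzero parts), 0-indexed. -/
def IsPartition (μ : ℕ → ℕ) : Prop :=
  Antitone μ ∧ ∃ N, ∀ i, N ≤ i → μ i = 0

/-- `λ(μ,ν)_k = μ_k − k + #{j : 1 ≤ j ≤ n, ν_j − j ≥ μ_k − k}`, 0-indexed,
so the (k+1)-st part of `λ(μ,ν)`, as an integer. -/
def lamStar (n : ℕ) (μ ν : ℕ → ℕ) (k : ℕ) : ℤ :=
  (μ k : ℤ) - (k + 1) +
    ((Finset.range n).filter (fun j => (μ k : ℤ) - (k + 1) ≤ (ν j : ℤ) - (j + 1))).card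

/-- `ρ(μ,ν)_j = ν_j − j + 1 + #{k : 1 ≤ k ≤ n, μ_k − k > ν_j − j}`, 0-indexed. -/
def rhoStar (n : ℕ) (μ ν : ℕ → ℕ) (j : ℕ) : ℤ :=
  (ν j : ℤ) - (j + 1) + 1 +
    ((Finset.range n).filter (fun k => (ν j : ℤ) - (j + 1) < (μ k : ℤ) - (k + 1))).card

/-- `λ(μ,ν)` as a sequence of natural numbers. -/
def lamStarN (n : ℕ) (μ ν : ℕ → ℕ) (k : ℕ) : ℕ := (lamStar n μ ν k).toNat

/-- `ρ(μ,ν)` as a sequence of natural numbers. -/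
def rhoStarN (n : ℕ) (μ ν : ℕ → ℕ) (k : ℕ) : ℕ := (rhoStar n μ ν k).toNat

/-- The conjugate partition: `μ′_i = #{k : μ_k ≥ i}` (1-indexed), recorded 0-indexed. -/
noncomputable def conjP (μ : ℕ → ℕ) (i : ℕ) : ℕ := {k : ℕ | i + 1 ≤ μ k}.ncard

/-- Remove a full column of height `k`: subtract 1 from the first `k` parts. -/
def removeCol (k : ℕ) (σ : ℕ → ℕ) : ℕ → ℕ := fun j => if j < k then σ j - 1 else σ j

/-- An LR filling of the skew shape `θ/ν` of type `μ` (all 0-indexed; cell `(i,j)`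
is row `i+1`, column `j+1`; the entry `0` marks cells outside the skew shape).
Rows weakly increase, columns strictly increase, the entry `m+1` occurs `μ m`
times, and the reverse reading word (rows top to bottom, each row right to left)
is a lattice permutation. It is required that `ν ⊆ θ`. -/
def IsLRFilling (θ ν μ : ℕ → ℕ) (T : ℕ → ℕ → ℕ) : Prop :=
  (∀ i, ν i ≤ θ i) ∧
  (∀ i j, ν i ≤ j → j < θ i → 1 ≤ T i j) ∧
  (∀ i j, ¬(ν i ≤ j ∧ j < θ i) → T i j = 0) ∧
  (∀ i j j', ν i ≤ j → j ≤ j' → j' < θ i → T i j ≤ T i j') ∧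
  (∀ i i' j, i < i' → ν i ≤ j → j < θ i → ν i' ≤ j → j < θ i' → T i j < T i' j) ∧
  (∀ m : ℕ, {p : ℕ × ℕ | T p.1 p.2 = m + 1}.ncard = μ m) ∧
  (∀ m i j : ℕ,
    {p : ℕ × ℕ | T p.1 p.2 = m + 2 ∧ (p.1 < i ∨ (p.1 = i ∧ j ≤ p.2))}.ncard ≤
    {p : ℕ × ℕ | T p.1 p.2 = m + 1 ∧ (p.1 < i ∨ (p.1 = i ∧ j ≤ p.2))}.ncard)

/-- The Littlewood–Richardson coefficient `c_{μν}^θ`: the number of LR fillings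
of `θ/ν` of type `μ` (equal to `0` when `ν ⊄ θ`). -/
noncomputable def lrCoeff (μ ν θ : ℕ → ℕ) : ℕ := Nat.card {T : ℕ → ℕ → ℕ // IsLRFilling θ ν μ T}

section Basic

variable {θ ν μ : ℕ → ℕ} {T : ℕ → ℕ → ℕ}

/-- Cells carrying a fixed positive value form a finite set. -/
lemma valSet_finite (hθ : IsPartition θ) (hT : IsLRFilling θ ν μ T) {v : ℕ} (hv : 1 ≤ v) :
    {p : ℕ × ℕ | T p.1 p.2 = v}.Finite := by
  obtain ⟨hmono, N, hN⟩ := hθ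
  apply Set.Finite.subset ((Finset.range N ×ˢ Finset.range (θ 0)).finite_toSet)
  rintro ⟨i, j⟩ h
  simp only [Set.mem_setOf_eq] at h
  have hin : ν i ≤ j ∧ j < θ i := by
    by_contra hc
    have := hT.2.2.1 i j hc
    omega
  have hiN : i < N := by
    by_contra hc
    have := hN i (by omega)
    omega
  have : j < θ 0 := lt_of_lt_of_le hin.2 (hmono (Nat.zero_le i))
  simp [hiN, this]

/-- Entries in row `i` are at most `i+1`. -/
lemma entry_le (hθ : IsPartition θ) (hT : IsLRFilling θ ν μ T) (i j : ℕ) :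
    T i j ≤ i + 1 := by
  suffices h : ∀ v i j, T i j = v → v ≤ i + 1 from h _ i j rfl
  intro v
  induction v with
  | zero => intro i j _; omega
  | succ v ih =>
    intro i j h
    rcases Nat.eq_zero_or_pos v with rfl | hv
    · omega
    obtain ⟨m, rfl⟩ : ∃ m, v = m + 1 := ⟨v - 1, by omega⟩
    have h7 := hT.2.2.2.2.2.2 m i j
    set S2 := {p : ℕ × ℕ | T p.1 p.2 = m + 2 ∧ (p.1 < i ∨ (p.1 = i ∧ j ≤ p.2))} with hS2
    set S1 := {p : ℕ × ℕ | T p.1 p.2 = m + 1 ∧ (p.1 < i ∨ (p.1 = i ∧ j ≤ p.2))} with hS1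
    have hfin2 : S2.Finite :=
      (valSet_finite hθ hT (v := m + 2) (by omega)).subset (fun p hp => hp.1)
    have hfin1 : S1.Finite :=
      (valSet_finite hθ hT (v := m + 1) (by omega)).subset (fun p hp => hp.1)
    have hmem : (i, j) ∈ S2 := ⟨h, Or.inr ⟨rfl, le_refl j⟩⟩
    have h2pos : 0 < S2.ncard := (Set.ncard_pos hfin2).mpr ⟨_, hmem⟩
    obtain ⟨q, hq⟩ : S1.Nonempty :=
      (Set.ncard_pos hfin1).mp (lt_of_lt_of_le h2pos h7)
    obtain ⟨i', j'⟩ := q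
    simp only [hS1, Set.mem_setOf_eq] at hq
    obtain ⟨hv', hpos⟩ := hq
    rcases hpos with hlt | ⟨rfl, hle⟩
    · have := ih i' j' hv'
      omega
    · -- same row, to the right: row-weakness contradiction
      exfalso
      have hin : ν i' ≤ j ∧ j < θ i' := by
        by_contra hc
        have := hT.2.2.1 i' j hc
        omega
      have hin' : ν i' ≤ j' ∧ j' < θ i' := by
        by_contra hc
        have := hT.2.2.1 i' j' hc
        omega
      have := hT.2.2.2.1 i' j j' hin.1 hle hin'.2
      omega

/-- Columns to the right of `ν 0`: row `i` is filled with the value `i+1`. -/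
lemma full_row (hθ : IsPartition θ) (hν : Antitone ν) (hT : IsLRFilling θ ν μ T) :
    ∀ i c, ν 0 ≤ c → c < θ i → T i c = i + 1 := by
  have hup : ∀ i c, ν 0 ≤ c → c < θ i → i + 1 ≤ T i c := by
    intro i
    induction i with
    | zero => intro c h1 h2; exact hT.2.1 0 c h1 h2
    | succ i ih =>
      intro c h1 h2
      have hci : c < θ i := lt_of_lt_of_le h2 (hθ.1 (Nat.le_succ i))
      have hprev := ih c h1 hci
      have := hT.2.2.2.2.1 i (i + 1) c (Nat.lt_succ_self i)
        (le_trans (hν (Nat.zero_le i)) h1) hci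
        (le_trans (hν (Nat.zero_le (i + 1))) h1) h2
      omega
  intro i c h1 h2
  have := entry_le hθ hT i c
  have := hup i c h1 h2
  omega

/-- If a filling exists then `μ ⊆ θ`. -/
lemma theta_ge (hθ : IsPartition θ) (hT : IsLRFilling θ ν μ T) (k : ℕ) :
    μ k ≤ θ k := by
  have h6 := hT.2.2.2.2.2.1 k
  rw [← h6, ← Finset.card_range (θ k), ← Set.ncard_coe_finset (Finset.range (θ k))]
  apply Set.ncard_le_ncard_of_injOn (fun p => p.2)
  · rintro ⟨i, j⟩ hp
    simp only [Set.mem_setOf_eq] at hp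
    have hrow : k ≤ i := by have := entry_le hθ hT i j; omega
    have hin : ν i ≤ j ∧ j < θ i := by
      by_contra hc
      have := hT.2.2.1 i j hc
      omega
    have : j < θ k := lt_of_lt_of_le hin.2 (hθ.1 hrow)
    simpa using this
  · rintro ⟨i, j⟩ hp ⟨i', j'⟩ hp' hj
    simp only [Set.mem_setOf_eq] at hp hp' hj
    subst hj
    rcases lt_trichotomy i i' with h | h | h
    · exfalso
      have hin : ν i ≤ j ∧ j < θ i := by
        by_contra hc; have := hT.2.2.1 i j hc; omega
      have hin' : ν i' ≤ j ∧ j < θ i' := by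
        by_contra hc; have := hT.2.2.1 i' j hc; omega
      have := hT.2.2.2.2.1 i i' j h hin.1 hin.2 hin'.1 hin'.2
      omega
    · simp [h]
    · exfalso
      have hin : ν i ≤ j ∧ j < θ i := by
        by_contra hc; have := hT.2.2.1 i j hc; omega
      have hin' : ν i' ≤ j ∧ j < θ i' := by
        by_contra hc; have := hT.2.2.1 i' j hc; omega
      have := hT.2.2.2.2.1 i' i j h hin'.1 hin'.2 hin.1 hin.2
      omega

/-- If a filling exists then `θ k ≤ μ k + ν 0`. -/
lemma theta_le (hθ : IsPartition θ) (hν : Antitone ν) (hT : IsLRFilling θ ν μ T) (k : ℕ) :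
    θ k ≤ μ k + ν 0 := by
  by_cases hk : θ k ≤ ν 0
  · omega
  push_neg at hk
  have h6 := hT.2.2.2.2.2.1 k
  have hsub : ↑({k} ×ˢ Finset.Ico (ν 0) (θ k)) ⊆ {p : ℕ × ℕ | T p.1 p.2 = k + 1} := by
    rintro ⟨i, j⟩ hp
    simp only [Finset.coe_product, Set.mem_prod, Finset.coe_singleton,
      Set.mem_singleton_iff, Finset.coe_Ico, Set.mem_Ico] at hp
    obtain ⟨rfl, h1, h2⟩ := hp
    exact full_row hθ hν hT _ j h1 h2
  have hfin := valSet_finite hθ hT (v := k + 1) (by omega)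
  have := Set.ncard_le_ncard hsub hfin
  rw [Set.ncard_coe_finset, h6] at this
  simp only [Finset.card_product, Finset.card_singleton, Nat.card_Ico, one_mul] at this
  omega

/-- The type of LR fillings of a (finite) shape is finite. -/
lemma filling_finite (hθ : IsPartition θ) :
    Finite {T : ℕ → ℕ → ℕ // IsLRFilling θ ν μ T} := by
  obtain ⟨hmono, N, hN⟩ := id hθ
  apply Finite.of_injective
    (fun T : {T : ℕ → ℕ → ℕ // IsLRFilling θ ν μ T} =>
      (fun i : Fin N => fun j : Fin (θ 0) => (⟨T.1 i j, by
        have := entry_le hθ T.2 i j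
        omega⟩ : Fin (N + 2))))
  intro T T' h
  have key : ∀ (S : {T : ℕ → ℕ → ℕ // IsLRFilling θ ν μ T}) i j,
      ¬(i < N ∧ j < θ 0) → S.1 i j = 0 := by
    intro S i j hc
    apply S.2.2.2.1
    rintro ⟨h1, h2⟩
    rcases Nat.lt_or_ge i N with hi | hi
    · exact hc ⟨hi, lt_of_lt_of_le h2 (hmono (Nat.zero_le i))⟩
    · rw [hN i hi] at h2; omega
  ext i j
  by_cases hij : i < N ∧ j < θ 0
  · have := congrFun (congrFun h ⟨i, hij.1⟩) ⟨j, hij.2⟩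
    simpa using congrArg Fin.val this
  · rw [key T i j hij, key T' i j hij]

end Basic
section Remove

variable {θ ν μ : ℕ → ℕ}

/-- Removing the last cell from each of the first `t` rows of an LR filling,
when `μ` has a large gap after part `t`. -/
lemma remove_filling (hθ : IsPartition θ) (hν : Antitone ν) (hμ : Antitone μ)
    (t : ℕ) (ht : 1 ≤ t) (hgap : μ t + ν 0 + 2 ≤ μ (t - 1))
    {T : ℕ → ℕ → ℕ} (hT : IsLRFilling θ ν μ T) :
    IsLRFilling (removeCol t θ) ν (removeCol t μ)
      (fun i j => if i < t ∧ j = θ i - 1 then 0 else T i j) := by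
  have hge : ∀ k, μ k ≤ θ k := theta_ge hθ hT
  have hle : ∀ k, θ k ≤ μ k + ν 0 := theta_le hθ hν hT
  have hbig : ∀ i, i < t → ν 0 + 2 ≤ θ i := by
    intro i hi
    have h1 := hge i
    have h2 : μ (t - 1) ≤ μ i := hμ (by omega)
    omega
  have hrowfull : ∀ i c, ν 0 ≤ c → c < θ i → T i c = i + 1 := full_row hθ hν hT
  have hend : ∀ i, i < t → T i (θ i - 1) = i + 1 := by
    intro i hi
    have := hbig i hi
    exact hrowfull i (θ i - 1) (by omega) (by omega)
  have hout : ∀ i j, ¬(ν i ≤ j ∧ j < θ i) → T i j = 0 := hT.2.2.1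
  have hin : ∀ i j v, T i j = v → 1 ≤ v → ν i ≤ j ∧ j < θ i := by
    intro i j v hv h1
    by_contra hc
    have := hout i j hc
    omega
  -- set identities for values
  have hsetlo : ∀ v, 1 ≤ v → v ≤ t →
      {p : ℕ × ℕ | (if p.1 < t ∧ p.2 = θ p.1 - 1 then 0 else T p.1 p.2) = v} =
      {p : ℕ × ℕ | T p.1 p.2 = v} \ {(v - 1, θ (v - 1) - 1)} := by
    intro v h1 h2
    ext ⟨a, b⟩
    simp only [Set.mem_setOf_eq, Set.mem_diff, Set.mem_singleton_iff, Prod.mk.injEq]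
    constructor
    · intro h
      by_cases hc : a < t ∧ b = θ a - 1
      · rw [if_pos hc] at h; omega
      · rw [if_neg hc] at h
        refine ⟨h, ?_⟩
        rintro ⟨rfl, rfl⟩
        exact hc ⟨by omega, rfl⟩
    · rintro ⟨hv, hne⟩
      by_cases hc : a < t ∧ b = θ a - 1
      · exfalso
        have := hend a hc.1
        rw [hc.2] at hv
        have hav : a = v - 1 := by omega
        refine hne ⟨hav, ?_⟩
        rw [← hav]
        exact hc.2
      · rw [if_neg hc]
        exact hv
  have hsethi : ∀ v, t < v →
      {p : ℕ × ℕ | (if p.1 < t ∧ p.2 = θ p.1 - 1 then 0 else T p.1 p.2) = v} =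
      {p : ℕ × ℕ | T p.1 p.2 = v} := by
    intro v h1
    ext ⟨a, b⟩
    simp only [Set.mem_setOf_eq]
    by_cases hc : a < t ∧ b = θ a - 1
    · have := hend a hc.1
      rw [hc.2]
      rw [if_pos (⟨hc.1, rfl⟩ : a < t ∧ θ a - 1 = θ a - 1)]
      constructor
      · omega
      · intro h; omega
    · rw [if_neg hc]
  refine ⟨?_, ?_, ?_, ?_, ?_, ?_, ?_⟩
  · -- ν ⊆ removeCol t θ
    intro i
    simp only [removeCol]
    split
    · rename_i hi
      have h1 := hbig i hi
      have h2 : ν i ≤ ν 0 := hν (Nat.zero_le i)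
      omega
    · exact hT.1 i
  · -- positivity on the shape
    intro i j h1 h2
    simp only [removeCol] at h2
    by_cases hc : i < t ∧ j = θ i - 1
    · exfalso; simp only [hc.1, if_true] at h2; omega
    · simp only [hc, if_false]
      apply hT.2.1 i j h1
      split at h2 <;> omega
  · -- zero outside the shape
    intro i j hcc
    by_cases hc : i < t ∧ j = θ i - 1
    · simp [hc]
    · simp only [hc, if_false]
      apply hout
      rintro ⟨h1, h2⟩
      apply hcc
      refine ⟨h1, ?_⟩
      simp only [removeCol]
      split
      · rename_i hi
        have : j ≠ θ i - 1 := fun hj => hc ⟨hi, hj⟩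
        omega
      · exact h2
  · -- rows weakly increasing
    intro i j j' h1 h2 h3
    simp only [removeCol] at h3
    have h3' : j' < θ i := by split at h3 <;> omega
    have hcj : ¬(i < t ∧ j = θ i - 1) := by
      rintro ⟨hi, rfl⟩
      simp only [hi, if_true] at h3
      omega
    have hcj' : ¬(i < t ∧ j' = θ i - 1) := by
      rintro ⟨hi, rfl⟩
      simp only [hi, if_true] at h3
      omega
    simp only [hcj, hcj', if_false]
    exact hT.2.2.2.1 i j j' h1 h2 h3'
  · -- columns strictly increasing
    intro i i' j h0 h1 h2 h3 h4
    simp only [removeCol] at h2 h4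
    have h2' : j < θ i := by split at h2 <;> omega
    have h4' : j < θ i' := by split at h4 <;> omega
    have hci : ¬(i < t ∧ j = θ i - 1) := by
      rintro ⟨hi, rfl⟩
      simp only [hi, if_true] at h2
      omega
    have hci' : ¬(i' < t ∧ j = θ i' - 1) := by
      rintro ⟨hi, rfl⟩
      simp only [hi, if_true] at h4
      omega
    simp only [hci, hci', if_false]
    exact hT.2.2.2.2.1 i i' j h0 h1 h2' h3 h4'
  · -- content
    intro m
    by_cases hm : m + 1 ≤ t
    · rw [hsetlo (m + 1) (by omega) hm]
      have hmem : (m + 1 - 1, θ (m + 1 - 1) - 1) ∈ {p : ℕ × ℕ | T p.1 p.2 = m + 1} := by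
        simp only [Set.mem_setOf_eq, Nat.add_sub_cancel]
        exact hend m (by omega)
      rw [Set.ncard_diff_singleton_of_mem hmem]
      rw [hT.2.2.2.2.2.1 m]
      simp only [removeCol]
      rw [if_pos (by omega : m < t)]
    · rw [hsethi (m + 1) (by omega), hT.2.2.2.2.2.1 m]
      simp only [removeCol]
      rw [if_neg (by omega : ¬ m < t)]
  · -- lattice condition
    intro m i j
    set Bef : ℕ × ℕ → Prop := fun p => p.1 < i ∨ (p.1 = i ∧ j ≤ p.2) with hBef
    have hgen : ∀ v, 1 ≤ v → {p : ℕ × ℕ |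
        (if p.1 < t ∧ p.2 = θ p.1 - 1 then 0 else T p.1 p.2) = v ∧ Bef p} =
        (if v ≤ t then {p : ℕ × ℕ | T p.1 p.2 = v ∧ Bef p} \ {(v - 1, θ (v - 1) - 1)}
         else {p : ℕ × ℕ | T p.1 p.2 = v ∧ Bef p}) := by
      intro v h1
      split
      · rename_i hv
        have := hsetlo v h1 hv
        ext p
        have hp := Set.ext_iff.mp this p
        simp only [Set.mem_setOf_eq, Set.mem_diff, Set.mem_singleton_iff] at hp ⊢
        tauto
      · rename_i hv
        have := hsethi v (by omega)
        ext p
        have hp := Set.ext_iff.mp this p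
        simp only [Set.mem_setOf_eq] at hp ⊢
        tauto
    have hfinB : {p : ℕ × ℕ | T p.1 p.2 = m + 1 ∧ Bef p}.Finite :=
      (valSet_finite hθ hT (by omega : 1 ≤ m + 1)).subset (fun p hp => hp.1)
    have hfinA : {p : ℕ × ℕ | T p.1 p.2 = m + 2 ∧ Bef p}.Finite :=
      (valSet_finite hθ hT (by omega : 1 ≤ m + 2)).subset (fun p hp => hp.1)
    have hAB := hT.2.2.2.2.2.2 m i j
    rw [hgen (m + 2) (by omega), hgen (m + 1) (by omega)]
    simp only [show m + 2 - 1 = m + 1 from rfl, show m + 1 - 1 = m from rfl]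
    set A := {p : ℕ × ℕ | T p.1 p.2 = m + 2 ∧ Bef p} with hA
    set B := {p : ℕ × ℕ | T p.1 p.2 = m + 1 ∧ Bef p} with hB
    have hABn : A.ncard ≤ B.ncard := hAB
    by_cases hm2 : m + 2 ≤ t
    · -- both values get one cell removed
      rw [if_pos hm2, if_pos (by omega : m + 1 ≤ t)]
      have hc2v : T (m + 1) (θ (m + 1) - 1) = m + 2 := by
        have := hend (m + 1) (by omega)
        omega
      have hc1v : T m (θ m - 1) = m + 1 := by
        have := hend m (by omega)
        omega
      by_cases hb2 : Bef (m + 1, θ (m + 1) - 1)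
      · -- both removed cells are in the prefix
        have hb1 : Bef (m, θ m - 1) := by
          simp only [hBef] at hb2 ⊢
          omega
        have hm2A : (m + 1, θ (m + 1) - 1) ∈ A := ⟨hc2v, hb2⟩
        have hm1B : (m, θ m - 1) ∈ B := ⟨hc1v, hb1⟩
        rw [Set.ncard_diff_singleton_of_mem hm2A,
          Set.ncard_diff_singleton_of_mem hm1B]
        have h1 : 1 ≤ A.ncard := (Set.ncard_pos hfinA).mpr ⟨_, hm2A⟩
        omega
      · have hAe : A \ {(m + 1, θ (m + 1) - 1)} = A := by
          apply Set.diff_singleton_eq_self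
          intro hmem
          exact hb2 hmem.2
        rw [hAe]
        by_cases hb1 : Bef (m, θ m - 1)
        · -- the prefix contains no entry equal to m+2 at all
          have hAempty : A = ∅ := by
            ext ⟨a, b⟩
            simp only [hA, Set.mem_setOf_eq, Set.mem_empty_iff_false, iff_false]
            rintro ⟨hval, hbef⟩
            have hrow : m + 1 ≤ a := by
              have := entry_le hθ hT a b
              omega
            simp only [hBef] at hb2 hbef
            push_neg at hb2
            rcases hbef with h | ⟨hai, hjb⟩
            · omega
            · have hieq : m + 1 = i := by omega
              have h2' := hb2.2 hieq
              have hbg := hbig (m + 1) (by omega)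
              have hsh := hin a b (m + 2) hval (by omega)
              rw [show a = m + 1 by omega] at hsh
              omega
          rw [hAempty]
          simp
        · have hBe : B \ {(m, θ m - 1)} = B := by
            apply Set.diff_singleton_eq_self
            intro hmem
            exact hb1 hmem.2
          rw [hBe]
          exact hABn
    · rw [if_neg hm2]
      by_cases hm1 : m + 1 ≤ t
      · -- m + 1 = t
        have hmt : m + 1 = t := by omega
        rw [if_pos hm1]
        have hc1v : T m (θ m - 1) = m + 1 := by
          have := hend m (by omega)
          omega
        by_cases hb1 : Bef (m, θ m - 1)
        · have hm1B : (m, θ m - 1) ∈ B := ⟨hc1v, hb1⟩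
          rw [Set.ncard_diff_singleton_of_mem hm1B]
          rcases Nat.lt_or_ge i t with hit | hit
          · -- the prefix contains no entry equal to m+2 at all
            have hAempty : A = ∅ := by
              ext ⟨a, b⟩
              simp only [hA, Set.mem_setOf_eq, Set.mem_empty_iff_false, iff_false]
              rintro ⟨hval, hbef⟩
              have hrow : m + 1 ≤ a := by
                have := entry_le hθ hT a b
                omega
              simp only [hBef] at hbef
              rcases hbef with h | ⟨hai, hjb⟩
              · omega
              · -- a = i < t = m + 1 yet a ≥ m + 1
                omega
            rw [hAempty]
            simp
          · -- i ≥ t : all the t's in row t-1 are in the prefix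
            have hsubR : ↑({m} ×ˢ Finset.Ico (ν 0) (θ m)) ⊆ B := by
              rintro ⟨a, b⟩ hp
              simp only [Finset.coe_product, Set.mem_prod, Finset.coe_singleton,
                Set.mem_singleton_iff, Finset.coe_Ico, Set.mem_Ico] at hp
              obtain ⟨hat, hb1', hb2'⟩ := hp
              subst hat
              refine ⟨hrowfull a b hb1' hb2', Or.inl (by omega)⟩
            have hBL : θ m - ν 0 ≤ B.ncard := by
              have := Set.ncard_le_ncard hsubR hfinB
              rwa [Set.ncard_coe_finset, Finset.card_product, Finset.card_singleton,
                Nat.card_Ico, one_mul] at this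
            have hAU : A.ncard ≤ μ (m + 1) := by
              have hsubA : A ⊆ {p : ℕ × ℕ | T p.1 p.2 = m + 2} := fun p hp => hp.1
              have := Set.ncard_le_ncard hsubA (valSet_finite hθ hT (by omega))
              rwa [hT.2.2.2.2.2.1 (m + 1)] at this
            have hθt1 : μ (t - 1) ≤ θ (t - 1) := hge (t - 1)
            have hth : θ (t - 1) = θ m := by rw [show t - 1 = m by omega]
            have hmm : μ (t - 1) = μ m := by rw [show t - 1 = m by omega]
            have hmt2 : μ t = μ (m + 1) := by rw [hmt]
            omega
        · have hBe : B \ {(m, θ m - 1)} = B := by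
            apply Set.diff_singleton_eq_self
            intro hmem
            exact hb1 hmem.2
          rw [hBe]
          exact hABn
      · rw [if_neg hm1]
        exact hABn



/-- Column removal decreases the LR coefficient count (injectively). -/
lemma lrCoeff_remove_le (hθ : IsPartition θ) (hθt : IsPartition (removeCol t θ))
    (hν : Antitone ν) (hμ : Antitone μ)
    (ht : 1 ≤ t) (hgap : μ t + ν 0 + 2 ≤ μ (t - 1)) :
    lrCoeff μ ν θ ≤ lrCoeff (removeCol t μ) ν (removeCol t θ) := by
  have : Finite {T : ℕ → ℕ → ℕ // IsLRFilling (removeCol t θ) ν (removeCol t μ) T} :=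
    filling_finite hθt
  apply Nat.card_le_card_of_injective
    (fun X : {T : ℕ → ℕ → ℕ // IsLRFilling θ ν μ T} =>
      (⟨fun i j => if i < t ∧ j = θ i - 1 then 0 else X.1 i j,
        remove_filling hθ hν hμ t ht hgap X.2⟩ :
        {T : ℕ → ℕ → ℕ // IsLRFilling (removeCol t θ) ν (removeCol t μ) T}))
  intro X Y h
  have hXY := congrArg Subtype.val h
  apply Subtype.ext
  funext a b
  by_cases hc : a < t ∧ b = θ a - 1
  · -- both end-cells carry the forced value `a+1`
    have hendX : X.1 a b = a + 1 := by
      rw [hc.2]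
      have hgeX := theta_ge hθ X.2 a
      have hmono : μ (t - 1) ≤ μ a := hμ (show a ≤ t - 1 by omega)
      exact full_row hθ hν X.2 a (θ a - 1) (by omega) (by omega)
    have hendY : Y.1 a b = a + 1 := by
      rw [hc.2]
      have hgeY := theta_ge hθ Y.2 a
      have hmono : μ (t - 1) ≤ μ a := hμ (show a ≤ t - 1 by omega)
      exact full_row hθ hν Y.2 a (θ a - 1) (by omega) (by omega)
    rw [hendX, hendY]
  · have := congrFun (congrFun hXY a) b
    simpa [hc] using this

end Remove
section Add

variable {θ ρ : ℕ → ℕ}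

/-- Appending a cell with entry `i+1` at the end of each of the first `t` rows. -/
lemma add_filling (hθ : IsPartition θ) (hθt : IsPartition (removeCol t θ))
    (ht : 1 ≤ t) (hstep : θ t < θ (t - 1))
    {lam lamt : ℕ → ℕ} (hlam : ∀ k, lam k = if k < t then lamt k + 1 else lamt k)
    {S : ℕ → ℕ → ℕ} (hS : IsLRFilling (removeCol t θ) ρ lamt S) :
    IsLRFilling θ ρ lam (fun i j => if i < t ∧ j = θ i - 1 then i + 1 else S i j) := by
  have hpos : ∀ i, i < t → 1 ≤ θ i := by
    intro i hi
    have : θ (t - 1) ≤ θ i := hθ.1 (show i ≤ t - 1 by omega)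
    omega
  have hrc : ∀ i, i < t → removeCol t θ i = θ i - 1 := by
    intro i hi; simp [removeCol, hi]
  have hrc' : ∀ i, ¬ i < t → removeCol t θ i = θ i := by
    intro i hi; simp [removeCol, hi]
  have hrle : ∀ i, removeCol t θ i ≤ θ i := by
    intro i; by_cases hi : i < t
    · rw [hrc i hi]; omega
    · rw [hrc' i hi]
  have hρ : ∀ i, ρ i ≤ removeCol t θ i := hS.1
  have hSle : ∀ i j, S i j ≤ i + 1 := entry_le hθt hS
  have hS0 : ∀ i, i < t → S i (θ i - 1) = 0 := by
    intro i hi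
    apply hS.2.2.1
    rintro ⟨-, h2⟩
    rw [hrc i hi] at h2
    omega
  have hSin : ∀ i j v, S i j = v → 1 ≤ v → ρ i ≤ j ∧ j < removeCol t θ i := by
    intro i j v hv h1
    by_contra hc
    have := hS.2.2.1 i j hc
    omega
  refine ⟨?_, ?_, ?_, ?_, ?_, ?_, ?_⟩
  · intro i
    exact le_trans (hρ i) (hrle i)
  · intro i j h1 h2
    show 1 ≤ if i < t ∧ j = θ i - 1 then i + 1 else S i j
    by_cases hc : i < t ∧ j = θ i - 1
    · rw [if_pos hc]; omega
    · rw [if_neg hc]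
      apply hS.2.1 i j h1
      by_cases hi : i < t
      · rw [hrc i hi]
        have : j ≠ θ i - 1 := fun hj => hc ⟨hi, hj⟩
        omega
      · rw [hrc' i hi]; exact h2
  · intro i j hout
    show (if i < t ∧ j = θ i - 1 then i + 1 else S i j) = 0
    by_cases hc : i < t ∧ j = θ i - 1
    · exfalso
      apply hout
      have h1 := hρ i
      rw [hrc i hc.1] at h1
      have := hpos i hc.1
      omega
    · rw [if_neg hc]
      apply hS.2.2.1
      rintro ⟨h1, h2⟩
      exact hout ⟨h1, lt_of_lt_of_le h2 (hrle i)⟩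
  · intro i j j' h1 h2 h3
    show (if i < t ∧ j = θ i - 1 then i + 1 else S i j) ≤
      (if i < t ∧ j' = θ i - 1 then i + 1 else S i j')
    by_cases hc' : i < t ∧ j' = θ i - 1
    · rw [if_pos hc']
      by_cases hc : i < t ∧ j = θ i - 1
      · rw [if_pos hc]
      · rw [if_neg hc]
        exact hSle i j
    · rw [if_neg hc']
      have hc : ¬(i < t ∧ j = θ i - 1) := by
        rintro ⟨hi, rfl⟩
        have : j' ≠ θ i - 1 := fun hj => hc' ⟨hi, hj⟩
        omega
      rw [if_neg hc]
      apply hS.2.2.2.1 i j j' h1 h2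
      by_cases hi : i < t
      · rw [hrc i hi]
        have : j' ≠ θ i - 1 := fun hj => hc' ⟨hi, hj⟩
        omega
      · rw [hrc' i hi]; exact h3
  · intro i i' j h0 h1 h2 h3 h4
    show (if i < t ∧ j = θ i - 1 then i + 1 else S i j) <
      (if i' < t ∧ j = θ i' - 1 then i' + 1 else S i' j)
    by_cases hc' : i' < t ∧ j = θ i' - 1
    · rw [if_pos hc']
      by_cases hc : i < t ∧ j = θ i - 1
      · rw [if_pos hc]; omega
      · rw [if_neg hc]
        have := hSle i j
        omega
    · rw [if_neg hc']
      have hc : ¬(i < t ∧ j = θ i - 1) := by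
        rintro ⟨hi, rfl⟩
        -- θ i - 1 < θ i' ≤ θ i forces θ i' = θ i, so the lower cell is also at a row end
        have hmono : θ i' ≤ θ i := hθ.1 (le_of_lt h0)
        have hpi := hpos i hi
        have hje : θ i' = θ i := by omega
        by_cases hi' : i' < t
        · exact hc' ⟨hi', by omega⟩
        · -- i' ≥ t : θ i' ≤ θ t < θ (t-1) ≤ θ i
          have h5 : θ i' ≤ θ t := hθ.1 (by omega)
          have h6 : θ (t - 1) ≤ θ i := hθ.1 (by omega)
          omega
      rw [if_neg hc]
      apply hS.2.2.2.2.1 i i' j h0 h1 _ h3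
      · by_cases hi' : i' < t
        · rw [hrc i' hi']
          have : j ≠ θ i' - 1 := fun hj => hc' ⟨hi', hj⟩
          omega
        · rw [hrc' i' hi']; exact h4
      · by_cases hi : i < t
        · rw [hrc i hi]
          have : j ≠ θ i - 1 := fun hj => hc ⟨hi, hj⟩
          omega
        · rw [hrc' i hi]; exact h2
  · -- content
    intro m
    have hset : ∀ v, 1 ≤ v → v ≤ t →
        {p : ℕ × ℕ | (if p.1 < t ∧ p.2 = θ p.1 - 1 then p.1 + 1 else S p.1 p.2) = v} =
        insert (v - 1, θ (v - 1) - 1) {p : ℕ × ℕ | S p.1 p.2 = v} := by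
      intro v h1 h2
      ext ⟨a, b⟩
      simp only [Set.mem_setOf_eq, Set.mem_insert_iff, Prod.mk.injEq]
      constructor
      · intro h
        by_cases hc : a < t ∧ b = θ a - 1
        · rw [if_pos hc] at h
          left
          refine ⟨by omega, ?_⟩
          rw [show v - 1 = a by omega]
          exact hc.2
        · rw [if_neg hc] at h
          right; exact h
      · intro h
        rcases h with ⟨ha, hb⟩ | h
        · rw [if_pos ⟨by omega, by rw [ha]; exact hb⟩]
          omega
        · by_cases hc : a < t ∧ b = θ a - 1
          · exfalso
            have := hS0 a hc.1
            rw [hc.2] at h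
            omega
          · rw [if_neg hc]; exact h
    by_cases hm : m + 1 ≤ t
    · rw [hset (m + 1) (by omega) hm]
      simp only [show m + 1 - 1 = m from rfl]
      have hnm : (m, θ m - 1) ∉ {p : ℕ × ℕ | S p.1 p.2 = m + 1} := by
        simp only [Set.mem_setOf_eq]
        have := hS0 m (by omega)
        omega
      rw [Set.ncard_insert_of_notMem hnm (valSet_finite hθt hS (by omega))]
      rw [hS.2.2.2.2.2.1 m, hlam m, if_pos (by omega : m < t)]
    · have hset' : {p : ℕ × ℕ |
          (if p.1 < t ∧ p.2 = θ p.1 - 1 then p.1 + 1 else S p.1 p.2) = m + 1} =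
          {p : ℕ × ℕ | S p.1 p.2 = m + 1} := by
        ext ⟨a, b⟩
        simp only [Set.mem_setOf_eq]
        by_cases hc : a < t ∧ b = θ a - 1
        · rw [if_pos hc]
          have := hS0 a hc.1
          rw [hc.2]
          constructor
          · intro h; omega
          · intro h; omega
        · rw [if_neg hc]
      rw [hset', hS.2.2.2.2.2.1 m, hlam m, if_neg (by omega : ¬ m < t)]
  · -- lattice
    intro m i j
    set Bef : ℕ × ℕ → Prop := fun p => p.1 < i ∨ (p.1 = i ∧ j ≤ p.2) with hBef
    have hset : ∀ v, 1 ≤ v →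
        {p : ℕ × ℕ | (if p.1 < t ∧ p.2 = θ p.1 - 1 then p.1 + 1 else S p.1 p.2) = v
          ∧ Bef p} =
        (if v ≤ t ∧ Bef (v - 1, θ (v - 1) - 1) then
          insert (v - 1, θ (v - 1) - 1) {p : ℕ × ℕ | S p.1 p.2 = v ∧ Bef p}
         else {p : ℕ × ℕ | S p.1 p.2 = v ∧ Bef p}) := by
      intro v h1
      ext ⟨a, b⟩
      by_cases hvt : v ≤ t
      · split
        · rename_i hcond
          simp only [Set.mem_setOf_eq, Set.mem_insert_iff, Prod.mk.injEq]
          constructor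
          · rintro ⟨hval, hbef⟩
            by_cases hc : a < t ∧ b = θ a - 1
            · rw [if_pos hc] at hval
              left
              refine ⟨by omega, ?_⟩
              rw [show v - 1 = a by omega]
              exact hc.2
            · rw [if_neg hc] at hval
              right; exact ⟨hval, hbef⟩
          · rintro (⟨ha, hb⟩ | ⟨hval, hbef⟩)
            · constructor
              · rw [if_pos ⟨by omega, by rw [ha]; exact hb⟩]
                omega
              · subst ha; subst hb; exact hcond.2
            · refine ⟨?_, hbef⟩
              by_cases hc : a < t ∧ b = θ a - 1
              · exfalso
                have := hS0 a hc.1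
                rw [hc.2] at hval
                omega
              · rw [if_neg hc]; exact hval
        · rename_i hcond
          have hnb : ¬ Bef (v - 1, θ (v - 1) - 1) := fun hb => hcond ⟨hvt, hb⟩
          simp only [Set.mem_setOf_eq]
          constructor
          · rintro ⟨hval, hbef⟩
            by_cases hc : a < t ∧ b = θ a - 1
            · exfalso
              rw [if_pos hc] at hval
              obtain ⟨hct, hcb⟩ := hc
              subst hcb
              apply hnb
              rw [show v - 1 = a by omega]
              exact hbef
            · rw [if_neg hc] at hval
              exact ⟨hval, hbef⟩
          · rintro ⟨hval, hbef⟩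
            refine ⟨?_, hbef⟩
            by_cases hc : a < t ∧ b = θ a - 1
            · exfalso
              have := hS0 a hc.1
              rw [hc.2] at hval
              omega
            · rw [if_neg hc]; exact hval
      · rw [if_neg (fun hcc => hvt hcc.1)]
        simp only [Set.mem_setOf_eq]
        constructor
        · rintro ⟨hval, hbef⟩
          by_cases hc : a < t ∧ b = θ a - 1
          · rw [if_pos hc] at hval; omega
          · rw [if_neg hc] at hval
            exact ⟨hval, hbef⟩
        · rintro ⟨hval, hbef⟩
          refine ⟨?_, hbef⟩
          by_cases hc : a < t ∧ b = θ a - 1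
          · exfalso
            have := hS0 a hc.1
            rw [hc.2] at hval
            omega
          · rw [if_neg hc]; exact hval
    have hAB : {p : ℕ × ℕ | S p.1 p.2 = m + 2 ∧ Bef p}.ncard ≤
        {p : ℕ × ℕ | S p.1 p.2 = m + 1 ∧ Bef p}.ncard := hS.2.2.2.2.2.2 m i j
    have hfinA : {p : ℕ × ℕ | S p.1 p.2 = m + 2 ∧ Bef p}.Finite :=
      (valSet_finite hθt hS (by omega : 1 ≤ m + 2)).subset (fun p hp => hp.1)
    have hfinB : {p : ℕ × ℕ | S p.1 p.2 = m + 1 ∧ Bef p}.Finite :=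
      (valSet_finite hθt hS (by omega : 1 ≤ m + 1)).subset (fun p hp => hp.1)
    rw [hset (m + 2) (by omega), hset (m + 1) (by omega)]
    simp only [show m + 2 - 1 = m + 1 from rfl, show m + 1 - 1 = m from rfl]
    have hnm2 : m + 1 < t → (m + 1, θ (m + 1) - 1) ∉
        {p : ℕ × ℕ | S p.1 p.2 = m + 2 ∧ Bef p} := by
      intro hmt
      rintro ⟨hval, -⟩
      have := hS0 (m + 1) hmt
      simp only [Set.mem_setOf_eq] at hval
      omega
    have hnm1 : m < t → (m, θ m - 1) ∉ {p : ℕ × ℕ | S p.1 p.2 = m + 1 ∧ Bef p} := by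
      intro hmt
      rintro ⟨hval, -⟩
      have := hS0 m hmt
      simp only [Set.mem_setOf_eq] at hval
      omega
    split
    · rename_i hc2
      -- the new `m+2` cell is in the prefix, hence so is the new `m+1` cell
      have hc1 : m + 1 ≤ t ∧ Bef (m, θ m - 1) := by
        refine ⟨by omega, ?_⟩
        have := hc2.2
        simp only [hBef] at this ⊢
        omega
      rw [if_pos hc1]
      rw [Set.ncard_insert_of_notMem (hnm2 (by omega)) hfinA,
        Set.ncard_insert_of_notMem (hnm1 (by omega)) hfinB]
      omega
    · split
      · rename_i hc1
        rw [Set.ncard_insert_of_notMem (hnm1 (by omega)) hfinB]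
        omega
      · exact hAB

/-- Adding back the column: the LR coefficient does not decrease. -/
lemma lrCoeff_add_le (hθ : IsPartition θ) (hθt : IsPartition (removeCol t θ))
    (ht : 1 ≤ t) (hstep : θ t < θ (t - 1))
    {lam lamt : ℕ → ℕ} (hlam : ∀ k, lam k = if k < t then lamt k + 1 else lamt k) :
    lrCoeff lamt ρ (removeCol t θ) ≤ lrCoeff lam ρ θ := by
  have : Finite {T : ℕ → ℕ → ℕ // IsLRFilling θ ρ lam T} := filling_finite hθ
  apply Nat.card_le_card_of_injective
    (fun X : {T : ℕ → ℕ → ℕ // IsLRFilling (removeCol t θ) ρ lamt T} =>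
      (⟨fun i j => if i < t ∧ j = θ i - 1 then i + 1 else X.1 i j,
        add_filling hθ hθt ht hstep hlam X.2⟩ :
        {T : ℕ → ℕ → ℕ // IsLRFilling θ ρ lam T}))
  intro X Y h
  have hXY := congrArg Subtype.val h
  apply Subtype.ext
  funext a b
  by_cases hc : a < t ∧ b = θ a - 1
  · -- both are zero there (outside the removed shape)
    have h0X : X.1 a b = 0 := by
      apply X.2.2.2.1
      rintro ⟨-, h2⟩
      simp only [removeCol, hc.1, if_true] at h2
      omega
    have h0Y : Y.1 a b = 0 := by
      apply Y.2.2.2.1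
      rintro ⟨-, h2⟩
      simp only [removeCol, hc.1, if_true] at h2
      omega
    rw [h0X, h0Y]
  · have := congrFun (congrFun hXY a) b
    simpa [hc] using this

end Add
section Star

/-- Effect of removing a long column of `μ` on the `*`-operation. -/
lemma star_eqs (p t : ℕ) (μ ν : ℕ → ℕ) (ht1 : 1 ≤ t) (htp : t ≤ p)
    (hν : Antitone ν) (hμ : Antitone μ)
    (hgap : μ t + ν 0 + p + 1 ≤ μ (t - 1)) :
    (∀ k, lamStarN p μ ν k = if k < t then lamStarN p (removeCol t μ) ν k + 1
      else lamStarN p (removeCol t μ) ν k) ∧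
    (∀ j, rhoStarN p (removeCol t μ) ν j = rhoStarN p μ ν j) := by
  have hmono : ∀ k, k < t → μ (t - 1) ≤ μ k := fun k hk => hμ (by omega)
  have hcast : ∀ k, k < t → ((removeCol t μ k : ℤ)) = (μ k : ℤ) - 1 := by
    intro k hk
    have h1 := hmono k hk
    simp only [removeCol, if_pos hk]
    omega
  have hνb : ∀ j : ℕ, (ν j : ℤ) - (j + 1) ≤ (ν 0 : ℤ) - 1 := by
    intro j
    have := hν (Nat.zero_le j)
    omega
  have hbig : ∀ k, k < t → (ν 0 : ℤ) ≤ (μ k : ℤ) - 1 - (k + 1) := by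
    intro k hk
    have h1 := hmono k hk
    have h2 : (k : ℤ) + 1 ≤ (t : ℤ) := by omega
    have h3 : (t : ℤ) ≤ (p : ℤ) := by omega
    omega
  have hlamval : ∀ k, k < t → lamStar p μ ν k = (μ k : ℤ) - (k + 1) := by
    intro k hk
    unfold lamStar
    have he : (Finset.range p).filter
        (fun j => (μ k : ℤ) - (k + 1) ≤ (ν j : ℤ) - (j + 1)) = ∅ := by
      apply Finset.filter_eq_empty_iff.mpr
      intro j _
      have := hνb j
      have := hbig k hk
      omega
    rw [he]
    simp
  have hlamtval : ∀ k, k < t →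
      lamStar p (removeCol t μ) ν k = (μ k : ℤ) - 1 - (k + 1) := by
    intro k hk
    unfold lamStar
    rw [hcast k hk]
    have he : (Finset.range p).filter
        (fun j => (μ k : ℤ) - 1 - (k + 1) ≤ (ν j : ℤ) - (j + 1)) = ∅ := by
      apply Finset.filter_eq_empty_iff.mpr
      intro j _
      have := hνb j
      have := hbig k hk
      omega
    rw [he]
    simp
  have hlamhi : ∀ k, ¬ k < t → lamStar p (removeCol t μ) ν k = lamStar p μ ν k := by
    intro k hk
    unfold lamStar
    rw [show removeCol t μ k = μ k from if_neg hk]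
  constructor
  · intro k
    by_cases hk : k < t
    · rw [if_pos hk]
      unfold lamStarN
      rw [hlamval k hk, hlamtval k hk]
      have := hbig k hk
      omega
    · rw [if_neg hk]
      unfold lamStarN
      rw [hlamhi k hk]
  · intro j
    unfold rhoStarN rhoStar
    have he : (Finset.range p).filter
        (fun k => (ν j : ℤ) - (j + 1) < (removeCol t μ k : ℤ) - (k + 1)) =
        (Finset.range p).filter
        (fun k => (ν j : ℤ) - (j + 1) < (μ k : ℤ) - (k + 1)) := by
      apply Finset.filter_congr
      intro k _
      by_cases hkt : k < t
      · rw [hcast k hkt]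
        have := hbig k hkt
        have := hνb j
        constructor
        · intro _; omega
        · intro _; omega
      · rw [show removeCol t μ k = μ k from if_neg hkt]
    rw [he]

end Star
/-- Reduction of the bounded-height case of the Fomin–Fulton–Li–Poon conjecture
to finitely many pairs: if the conjecture holds for all `(α,ν)` with `α` of
height at most `p` and `α_1 ≤ p(ν_1 + p)`, then it holds for all `(μ,ν)` with
`μ` of height at most `p`. -/
theorem fflp_bounded_height_reduction (p : ℕ) (hp : 0 < p) (ν : ℕ → ℕ)
    (hν : IsPartitionN p ν)
    (H : ∀ α : ℕ → ℕ, IsPartitionN p α → α 0 ≤ p * (ν 0 + p) →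
      ∀ θ : ℕ → ℕ, IsPartition θ →
        lrCoeff α ν θ ≤ lrCoeff (lamStarN p α ν) (rhoStarN p α ν) θ) :
    ∀ μ : ℕ → ℕ, IsPartitionN p μ →
      ∀ θ : ℕ → ℕ, IsPartition θ →
        lrCoeff μ ν θ ≤ lrCoeff (lamStarN p μ ν) (rhoStarN p μ ν) θ := by
  suffices h : ∀ n : ℕ, ∀ μ : ℕ → ℕ, IsPartitionN p μ → μ 0 = n →
      ∀ θ : ℕ → ℕ, IsPartition θ →
        lrCoeff μ ν θ ≤ lrCoeff (lamStarN p μ ν) (rhoStarN p μ ν) θ by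
    exact fun μ hμ => h (μ 0) μ hμ rfl
  intro n
  induction n using Nat.strong_induction_on with
  | _ n ih =>
    intro μ hμ hn θ hθ
    by_cases hb : μ 0 ≤ p * (ν 0 + p)
    · exact H μ hμ hb θ hθ
    push_neg at hb
    -- find a big gap in μ
    have hex : ∃ k, k < p ∧ μ (k + 1) + (ν 0 + p) < μ k := by
      by_contra hc
      push_neg at hc
      have key : ∀ k, k ≤ p → μ 0 ≤ μ k + k * (ν 0 + p) := by
        intro k
        induction k with
        | zero => simp
        | succ k ihk =>
          intro hk
          have h1 := ihk (by omega)
          have h2 := hc k (by omega)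
          rw [Nat.succ_mul]
          omega
      have hkey := key p le_rfl
      rw [hμ.2 p le_rfl] at hkey
      omega
    obtain ⟨k, hkp, hkgap⟩ := hex
    set t := k + 1 with htdef
    have ht1 : 1 ≤ t := by omega
    have htp : t ≤ p := by omega
    have htk : t - 1 = k := by omega
    have hgap : μ t + ν 0 + p + 1 ≤ μ (t - 1) := by
      rw [htk]
      omega
    set μt := removeCol t μ with hμtdef
    have hμtP : IsPartitionN p μt := by
      constructor
      · apply antitone_nat_of_succ_le
        intro m
        simp only [hμtdef, removeCol]
        have hmm : μ (m + 1) ≤ μ m := hμ.1 (Nat.le_succ m)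
        by_cases h1 : m + 1 < t
        · rw [if_pos h1, if_pos (by omega)]
          omega
        · rw [if_neg h1]
          by_cases h2 : m < t
          · rw [if_pos h2]
            have hmt : m = t - 1 := by omega
            rw [hmt, show t - 1 + 1 = t by omega]
            omega
          · rw [if_neg h2]
            omega
      · intro i hi
        simp only [hμtdef, removeCol]
        rw [if_neg (by omega : ¬ i < t)]
        exact hμ.2 i hi
    have hμt0 : μt 0 = μ 0 - 1 := by
      simp only [hμtdef, removeCol]
      rw [if_pos (by omega : 0 < t)]
    obtain ⟨hlam, hrho⟩ := star_eqs p t μ ν ht1 htp hν.1 hμ.1 hgap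
    by_cases h0 : lrCoeff μ ν θ = 0
    · rw [h0]
      exact Nat.zero_le _
    -- extract one filling of θ/ν of content μ to get the θ-inequalities
    obtain ⟨⟨T, hT⟩⟩ : Nonempty {T : ℕ → ℕ → ℕ // IsLRFilling θ ν μ T} := by
      have := Nat.card_ne_zero.mp (by rwa [lrCoeff] at h0)
      exact this.1
    have hθge : μ (t - 1) ≤ θ (t - 1) := theta_ge hθ hT (t - 1)
    have hθle : θ t ≤ μ t + ν 0 := theta_le hθ hν.1 hT t
    have hstep : θ t + 2 ≤ θ (t - 1) := by omega
    have hθtP : IsPartition (removeCol t θ) := by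
      constructor
      · apply antitone_nat_of_succ_le
        intro m
        simp only [removeCol]
        have hmm : θ (m + 1) ≤ θ m := hθ.1 (Nat.le_succ m)
        by_cases h1 : m + 1 < t
        · rw [if_pos h1, if_pos (by omega)]
          omega
        · rw [if_neg h1]
          by_cases h2 : m < t
          · rw [if_pos h2]
            have hmt : m = t - 1 := by omega
            rw [hmt, show t - 1 + 1 = t by omega]
            omega
          · rw [if_neg h2]
            omega
      · obtain ⟨N, hN⟩ := hθ.2
        refine ⟨N, fun i hi => ?_⟩
        simp only [removeCol]
        rw [hN i hi]
        split <;> rfl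
    have step1 : lrCoeff μ ν θ ≤ lrCoeff μt ν (removeCol t θ) :=
      lrCoeff_remove_le hθ hθtP hν.1 hμ.1 ht1 (by omega)
    have step2 : lrCoeff μt ν (removeCol t θ) ≤
        lrCoeff (lamStarN p μt ν) (rhoStarN p μt ν) (removeCol t θ) :=
      ih (μ 0 - 1) (by omega) μt hμtP (by omega) (removeCol t θ) hθtP
    have hrho' : rhoStarN p μt ν = rhoStarN p μ ν := funext hrho
    rw [hrho'] at step2
    have step3 : lrCoeff (lamStarN p μt ν) (rhoStarN p μ ν) (removeCol t θ) ≤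
        lrCoeff (lamStarN p μ ν) (rhoStarN p μ ν) θ :=
      lrCoeff_add_le hθ hθtP ht1 (by omega) hlam
    omega
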